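/- There is a bijective correspondence between a set X and the set of all nonzero K-algebra homomorphisms from F₀(X) to K, given by sending x ∈ X to the evaluation map ε_x(f) = f(x). -/

import Mathlib

noncomputable def evAux (K X : Type*) [Field K] (x : X) : (X →₀ K) →ₙₐ[K] K where
  toFun f := f x
  map_add' _ _ := rfl
  map_smul' _ _ := rfl
  map_mul' _ _ := Finsupp.mul_apply
  map_zero' := rfl

theorem statement0 (K X : Type*) [Field K] :
    ∃ e : X → {φ : (X →₀ K) →ₙₐ[K] K // φ ≠ 0},
      (∀ x f, (e x).1 f = f x) ∧ Function.Bijective e := by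
  classical
  have hne : ∀ x : X, evAux K X x ≠ 0 := by
    intro x h
    have : (Finsupp.single x (1:K)) x = 0 := by
      have := congrArg (fun φ => (φ : (X →₀ K) →ₙₐ[K] K) (Finsupp.single x 1)) h
      exact this
    simp at this
  refine ⟨fun x => ⟨evAux K X x, hne x⟩, fun x f => rfl, ?_, ?_⟩
  · intro x y h
    have h1 : (Finsupp.single x (1:K)) x = (Finsupp.single x (1:K)) y := by
      have := congrArg (fun φ => (φ : (X →₀ K) →ₙₐ[K] K) (Finsupp.single x 1)) (Subtype.ext_iff.mp h)
      exact this
    by_contra hxy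
    rw [Finsupp.single_eq_same, Finsupp.single_eq_of_ne' hxy] at h1
    exact one_ne_zero h1
  · rintro ⟨φ, hφ⟩
    set S : X → K := fun y => φ (Finsupp.single y 1) with hS
    have hsingle : ∀ y z : X, (Finsupp.single y (1:K)) * Finsupp.single z 1 =
        if y = z then Finsupp.single y 1 else 0 := by
      intro y z
      ext w
      simp only [Finsupp.mul_apply, Finsupp.single_apply]
      split_ifs with h1 h2 h3 <;> simp_all
    -- φ f = f.sum fun y c => c * S y
    have hrep : ∀ f : X →₀ K, φ f = f.sum fun y c => c * S y := by
      intro f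
      conv_lhs => rw [← Finsupp.sum_single f]
      rw [map_finsuppSum]
      refine Finsupp.sum_congr fun y _ => ?_
      rw [show Finsupp.single y (f y) = f y • Finsupp.single y 1 by
        rw [Finsupp.smul_single, smul_eq_mul, mul_one]]
      rw [map_smul, smul_eq_mul]
    -- exists y with S y ≠ 0
    have hex : ∃ y, S y ≠ 0 := by
      by_contra hall
      push_neg at hall
      apply hφ
      ext f
      simp [hrep f, hall, Finsupp.sum]
    obtain ⟨y, hy⟩ := hex
    have hidem : S y * S y = S y := by
      rw [hS]; dsimp only
      rw [← map_mul, hsingle, if_pos rfl]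
    have hy1 : S y = 1 := by
      have := mul_eq_zero.mp (by linear_combination hidem : S y * (S y - 1) = 0)
      rcases this with h | h
      · exact absurd h hy
      · exact sub_eq_zero.mp h
    have hz : ∀ z, z ≠ y → S z = 0 := by
      intro z hzy
      have : S y * S z = 0 := by
        rw [hS]; dsimp only
        rw [← map_mul, hsingle, if_neg (Ne.symm hzy), map_zero]
      rcases mul_eq_zero.mp this with h | h
      · exact absurd h hy
      · exact h
    refine ⟨y, Subtype.ext ?_⟩
    ext f
    show f y = φ f
    rw [hrep f, Finsupp.sum]
    rw [Finset.sum_eq_single y (fun z _ hzy => by rw [hz z hzy, mul_zero])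
      (fun h => by rw [Finsupp.notMem_support_iff.mp h, zero_mul])]
    rw [hy1, mul_one]
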